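/- arXiv:1908.11606 — 2 statements merged into one kernel-verified Lean document; each statement's English description precedes it below -/
import Mathlib

section
/- For w ∈ W^I ⊆ S_n and any reduced expression s_{i₁}s_{i₂}⋯s_{i_k} of w, the number #{m : i_m = j} of occurrences of the simple reflection s_j is independent of the chosen reduced expression. -/
open scoped Classical

noncomputable section

/-- The simple transposition `s_j` of `S_n` (0-indexed: it swaps positions `j` and `j+1`). -/
def sT (n j : ℕ) : Equiv.Perm (Fin n) :=
  if h : j + 1 < n then Equiv.swap ⟨j, Nat.lt_of_succ_lt h⟩ ⟨j + 1, h⟩ else 1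

/-- The Coxeter length of a permutation, as its number of inversions. -/
def invLen {n : ℕ} (w : Equiv.Perm (Fin n)) : ℕ :=
  (Finset.univ.filter fun p : Fin n × Fin n => p.1 < p.2 ∧ w p.2 < w p.1).card

/-- The parabolic subgroup `W_I ≅ S_i × S_{n-i}` generated by all simple transpositions
except the `i`-th one (1-indexed: we exclude `s_i`, i.e. the 0-indexed `sT n (i-1)`). -/
def WIsub (n i : ℕ) : Subgroup (Equiv.Perm (Fin n)) :=
  Subgroup.closure {g | ∃ m : ℕ, m + 1 < n ∧ m + 1 ≠ i ∧ g = sT n m}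

/-- `W^I`: the minimal length representatives of the cosets `w W_I`. -/
def minRep (n i : ℕ) : Set (Equiv.Perm (Fin n)) :=
  {w | ∀ m : ℕ, m + 1 < n → m + 1 ≠ i → invLen w < invLen (w * sT n m)}

/-- The path `λ^w = w · (↘,…,↘,↗,…,↗)` associated to `w`; `true` encodes `↘`,
`false` encodes `↗`; the symmetric group permutes positions. -/
def toPath {n : ℕ} (i : ℕ) (w : Equiv.Perm (Fin n)) : Fin n → Bool :=
  fun k => decide (((w⁻¹ k : Fin n) : ℕ) < i)

/-- `Λ_{n,i}`: the set of `n`-tuples of `↗`/`↘` with exactly `i` entries `↘`. -/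
def pathSet (n i : ℕ) : Set (Fin n → Bool) :=
  {lam | (Finset.univ.filter fun k => lam k = true).card = i}

/-- The height of the lattice path of `λ` at horizontal coordinate `j`
(the path starts at `(0,i)`; `↘` is a down-step, `↗` an up-step). -/
def hgt {n : ℕ} (i : ℕ) (lam : Fin n → Bool) (j : ℕ) : ℤ :=
  (i : ℤ) + ∑ k ∈ Finset.univ.filter (fun k : Fin n => (k : ℕ) < j),
      (if lam k then (-1 : ℤ) else 1)

/-- `λ ≤ μ`: the path `λ` lies weakly below the path `μ`. -/
def pathLE {n : ℕ} (i : ℕ) (lam mu : Fin n → Bool) : Prop :=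
  ∀ j ≤ n, hgt i lam j ≤ hgt i mu j

/-- Bruhat order on `S_n`: generated by `a < t·a` for transpositions `t`
with strictly increasing length. -/
def bruhatLE {n : ℕ} (u v : Equiv.Perm (Fin n)) : Prop :=
  Relation.ReflTransGen
    (fun a b => (∃ x y : Fin n, x ≠ y ∧ b = Equiv.swap x y * a) ∧ invLen a < invLen b) u v

/-- A Dyck strip of height `h`: the set of boxes (recorded by their centers) centered at the
integral points of a Dyck path from `(x₀,h)` to `(x₀+2l,h)` staying weakly below height `h`. -/
def IsDyckStrip (D : Finset (ℤ × ℤ)) (h : ℤ) : Prop :=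
  ∃ (x₀ : ℤ) (l : ℕ) (d : ℕ → ℤ),
    d 0 = 0 ∧ d (2 * l) = 0 ∧
    (∀ k < 2 * l, d (k + 1) = d k + 1 ∨ d (k + 1) = d k - 1) ∧
    (∀ k ≤ 2 * l, d k ≤ 0) ∧
    D = (Finset.range (2 * l + 1)).image fun k : ℕ => (x₀ + (k : ℤ), h + d k)

/-- The region `A(λ,μ)` between two paths `λ ≤ μ`, as the set of centers of the boxes
lying strictly between the two lattice paths. -/
def region {n : ℕ} (i : ℕ) (lam mu : Fin n → Bool) : Set (ℤ × ℤ) :=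
  {b | 0 ≤ b.1 ∧ b.1 ≤ (n : ℤ) ∧ Odd (b.1 + b.2 + (i : ℤ)) ∧
    hgt i lam b.1.toNat < b.2 ∧ b.2 < hgt i mu b.1.toNat}

/-- A Dyck partition of a region `A`: a partition of the boxes of `A` into Dyck strips. -/
def IsDyckPartition (P : Finset (Finset (ℤ × ℤ))) (A : Set (ℤ × ℤ)) : Prop :=
  (∀ D ∈ P, ∃ h, IsDyckStrip D h) ∧
  (∀ D ∈ P, ∀ D' ∈ P, D ≠ D' → Disjoint D D') ∧
  (⋃ D ∈ P, (D : Set (ℤ × ℤ))) = A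

/-- Type 1 condition: if some strip `D'` contains a box just above a box of `D`, then every box
just above a box of `D` is in `D'`. -/
def IsType1 (P : Finset (Finset (ℤ × ℤ))) : Prop :=
  ∀ D ∈ P, ∀ D' ∈ P, D ≠ D' → (∃ b ∈ D, (b.1, b.2 + 2) ∈ D') →
    ∀ b ∈ D, (b.1, b.2 + 2) ∈ D'

/-- The boxes just below, SW and SE of a box `b`. -/
def belowBoxes (b : ℤ × ℤ) : Finset (ℤ × ℤ) :=
  {(b.1, b.2 - 2), (b.1 - 1, b.2 - 1), (b.1 + 1, b.2 - 1)}

/-- Type 2 condition: if some strip `D'` contains a box just below, SW or SE of a box of `D`,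
then every box just below, SW or SE of a box of `D` belongs to `D` or `D'`. -/
def IsType2 (P : Finset (Finset (ℤ × ℤ))) : Prop :=
  ∀ D ∈ P, ∀ D' ∈ P, D ≠ D' → (∃ b ∈ D, ∃ c ∈ belowBoxes b, c ∈ D') →
    ∀ b ∈ D, ∀ c ∈ belowBoxes b, c ∈ D ∨ c ∈ D'

/-- `Conf¹(λ,μ)`: the set of type-1 Dyck partitions of the region `A(λ,μ)`. -/
def Conf1 {n : ℕ} (i : ℕ) (lam mu : Fin n → Bool) : Set (Finset (Finset (ℤ × ℤ))) :=
  {P | IsDyckPartition P (region i lam mu) ∧ IsType1 P}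

/-- `Conf²(λ,μ)`: the set of type-2 Dyck partitions of the region `A(λ,μ)`. -/
def Conf2 {n : ℕ} (i : ℕ) (lam mu : Fin n → Bool) : Set (Finset (Finset (ℤ × ℤ))) :=
  {P | IsDyckPartition P (region i lam mu) ∧ IsType2 P}

/-- The height of a Dyck strip (the largest `y`-coordinate of one of its boxes). -/
def stripHeight (D : Finset (ℤ × ℤ)) : ℤ := WithBot.unbotD 0 ((D.image Prod.snd).max)

/-- Two Dyck strips are distant if no box of one is just above or just below a box of the other. -/
def Distant (D C : Finset (ℤ × ℤ)) : Prop :=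
  ∀ b ∈ D, (b.1, b.2 + 2) ∉ C ∧ (b.1, b.2 - 2) ∉ C

/-- The order relation `P ≻ Q` on Dyck partitions. -/
def DPsucc (P Q : Finset (Finset (ℤ × ℤ))) : Prop :=
  ∃ h : ℤ, 0 < h ∧
    (∀ j : ℤ, h < j →
      P.filter (fun D => stripHeight D = j) = Q.filter (fun D => stripHeight D = j)) ∧
    P.filter (fun D => stripHeight D = h) ≠ Q.filter (fun D => stripHeight D = h) ∧
    (∀ D ∈ P.filter (fun D => stripHeight D = h),
      ∃ D' ∈ Q.filter (fun D => stripHeight D = h), D ⊆ D')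


section Aux

variable {n : ℕ}

theorem sT_eq {m : ℕ} (hm : m + 1 < n) :
    sT n m = Equiv.swap ⟨m, Nat.lt_of_succ_lt hm⟩ ⟨m + 1, hm⟩ := dif_pos hm

theorem sT_one' {m : ℕ} (hm : ¬ m + 1 < n) : sT n m = (1 : Equiv.Perm (Fin n)) := dif_neg hm

theorem sT_mul_self (m : ℕ) : sT n m * sT n m = 1 := by
  by_cases hm : m + 1 < n
  · rw [sT_eq hm, Equiv.swap_mul_self]
  · rw [sT_one' hm, one_mul]

theorem sT_apply_self (m : ℕ) (x : Fin n) : sT n m (sT n m x) = x := by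
  by_cases hm : m + 1 < n
  · rw [sT_eq hm]; exact Equiv.swap_apply_self _ _ x
  · rw [sT_one' hm]; rfl

theorem sT_val {m : ℕ} (hm : m + 1 < n) (x : Fin n) :
    ((sT n m x : Fin n) : ℕ) =
      if (x : ℕ) = m then m + 1 else if (x : ℕ) = m + 1 then m else (x : ℕ) := by
  rw [sT_eq hm]
  rcases eq_or_ne (x : ℕ) m with h | h
  · have hx : x = ⟨m, Nat.lt_of_succ_lt hm⟩ := Fin.ext h
    subst hx
    rw [Equiv.swap_apply_left]
    simp
  · rcases eq_or_ne (x : ℕ) (m + 1) with h' | h'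
    · have hx : x = ⟨m + 1, hm⟩ := Fin.ext h'
      subst hx
      rw [Equiv.swap_apply_right]
      simp
    · rw [Equiv.swap_apply_of_ne_of_ne (Fin.ne_of_val_ne h) (Fin.ne_of_val_ne h')]
      rw [if_neg h, if_neg h']

theorem sT_lt {m : ℕ} (hm : m + 1 < n) {a b : Fin n} (hab : a < b)
    (h : ¬((a : ℕ) = m ∧ (b : ℕ) = m + 1)) : sT n m a < sT n m b := by
  have ha := sT_val hm a
  have hb := sT_val hm b
  have hbn := b.isLt
  rw [Fin.lt_def] at hab ⊢
  rw [ha, hb]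
  split_ifs <;> omega

theorem invLen_mul_sT_of_lt {m : ℕ} (hm : m + 1 < n) (v : Equiv.Perm (Fin n))
    (hv : ((v ⟨m, Nat.lt_of_succ_lt hm⟩ : Fin n) : ℕ) < v ⟨m + 1, hm⟩) :
    invLen (v * sT n m) = invLen v + 1 := by
  classical
  set M : Fin n := ⟨m, Nat.lt_of_succ_lt hm⟩ with hMdef
  set M' : Fin n := ⟨m + 1, hm⟩ with hM'def
  have hsM : sT n m M = M' := by rw [sT_eq hm]; exact Equiv.swap_apply_left _ _
  have hsM' : sT n m M' = M := by rw [sT_eq hm]; exact Equiv.swap_apply_right _ _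
  have hss : ∀ x : Fin n, sT n m (sT n m x) = x := sT_apply_self m
  have hMM' : M < M' := by rw [Fin.lt_def]; exact Nat.lt_succ_self m
  have hp0A : ((M, M') : Fin n × Fin n) ∈ Finset.univ.filter
      (fun p : Fin n × Fin n => p.1 < p.2 ∧ (v * sT n m) p.2 < (v * sT n m) p.1) := by
    rw [Finset.mem_filter]
    refine ⟨Finset.mem_univ _, hMM', ?_⟩
    show v (sT n m M') < v (sT n m M)
    rw [hsM, hsM', Fin.lt_def]
    exact hv
  have hp0B : ((M, M') : Fin n × Fin n) ∉ Finset.univ.filter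
      (fun p : Fin n × Fin n => p.1 < p.2 ∧ v p.2 < v p.1) := by
    rw [Finset.mem_filter]
    rintro ⟨-, -, hlt⟩
    have hlt2 : v M' < v M := hlt
    rw [Fin.lt_def] at hlt2
    omega
  have key : (((Finset.univ.filter
        (fun p : Fin n × Fin n => p.1 < p.2 ∧ (v * sT n m) p.2 < (v * sT n m) p.1)).erase
          (M, M')).card)
      = ((Finset.univ.filter
          (fun p : Fin n × Fin n => p.1 < p.2 ∧ v p.2 < v p.1)).erase (M, M')).card := by
    refine Finset.card_bij' (fun p _ => (sT n m p.1, sT n m p.2))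
      (fun p _ => (sT n m p.1, sT n m p.2)) ?_ ?_ ?_ ?_
    · rintro ⟨a, b⟩ hp
      rw [Finset.mem_erase, Finset.mem_filter] at hp
      obtain ⟨hne, -, hab, hvv⟩ := hp
      rw [Finset.mem_erase, Finset.mem_filter]
      have hnot : ¬((a : ℕ) = m ∧ (b : ℕ) = m + 1) := by
        rintro ⟨h1, h2⟩
        exact hne (by rw [Prod.mk.injEq]; exact ⟨Fin.ext h1, Fin.ext h2⟩)
      refine ⟨?_, Finset.mem_univ _, sT_lt hm hab hnot, ?_⟩
      · intro hc
        rw [Prod.mk.injEq] at hc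
        obtain ⟨h1, h2⟩ := hc
        have ha : a = M' := by rw [← hss a, h1, hsM]
        have hb2 : b = M := by rw [← hss b, h2, hsM']
        rw [ha, hb2] at hab
        exact absurd hab (lt_asymm hMM')
      · exact hvv
    · rintro ⟨a, b⟩ hp
      rw [Finset.mem_erase, Finset.mem_filter] at hp
      obtain ⟨hne, -, hab, hvv⟩ := hp
      rw [Finset.mem_erase, Finset.mem_filter]
      have hnot : ¬((a : ℕ) = m ∧ (b : ℕ) = m + 1) := by
        rintro ⟨h1, h2⟩
        exact hne (by rw [Prod.mk.injEq]; exact ⟨Fin.ext h1, Fin.ext h2⟩)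
      refine ⟨?_, Finset.mem_univ _, sT_lt hm hab hnot, ?_⟩
      · intro hc
        rw [Prod.mk.injEq] at hc
        obtain ⟨h1, h2⟩ := hc
        have ha : a = M' := by rw [← hss a, h1, hsM]
        have hb2 : b = M := by rw [← hss b, h2, hsM']
        rw [ha, hb2] at hab
        exact absurd hab (lt_asymm hMM')
      · show (v * sT n m) (sT n m b) < (v * sT n m) (sT n m a)
        show v (sT n m (sT n m b)) < v (sT n m (sT n m a))
        rw [hss, hss]
        exact hvv
    · rintro ⟨a, b⟩ _
      rw [Prod.mk.injEq]
      exact ⟨hss a, hss b⟩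
    · rintro ⟨a, b⟩ _
      rw [Prod.mk.injEq]
      exact ⟨hss a, hss b⟩
  show (Finset.univ.filter
      (fun p : Fin n × Fin n => p.1 < p.2 ∧ (v * sT n m) p.2 < (v * sT n m) p.1)).card
    = (Finset.univ.filter (fun p : Fin n × Fin n => p.1 < p.2 ∧ v p.2 < v p.1)).card + 1
  rw [← Finset.card_erase_add_one hp0A, key, Finset.erase_eq_of_notMem hp0B]

theorem invLen_mul_sT_of_gt {m : ℕ} (hm : m + 1 < n) (v : Equiv.Perm (Fin n))
    (hv : ((v ⟨m + 1, hm⟩ : Fin n) : ℕ) < v ⟨m, Nat.lt_of_succ_lt hm⟩) :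
    invLen (v * sT n m) + 1 = invLen v := by
  have hsM : sT n m ⟨m, Nat.lt_of_succ_lt hm⟩ = ⟨m + 1, hm⟩ := by
    rw [sT_eq hm]; exact Equiv.swap_apply_left _ _
  have hsM' : sT n m ⟨m + 1, hm⟩ = ⟨m, Nat.lt_of_succ_lt hm⟩ := by
    rw [sT_eq hm]; exact Equiv.swap_apply_right _ _
  have h1 : (((v * sT n m) ⟨m, Nat.lt_of_succ_lt hm⟩ : Fin n) : ℕ) < (v * sT n m) ⟨m + 1, hm⟩ := by
    show ((v (sT n m ⟨m, Nat.lt_of_succ_lt hm⟩) : Fin n) : ℕ) < v (sT n m ⟨m + 1, hm⟩)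
    rw [hsM, hsM']
    exact hv
  have h2 := invLen_mul_sT_of_lt hm (v * sT n m) h1
  rw [mul_assoc, sT_mul_self, mul_one] at h2
  omega

theorem invLen_mul_sT_le (m : ℕ) (v : Equiv.Perm (Fin n)) :
    invLen (v * sT n m) ≤ invLen v + 1 := by
  by_cases hm : m + 1 < n
  · rcases Nat.lt_trichotomy ((v ⟨m, Nat.lt_of_succ_lt hm⟩ : Fin n) : ℕ)
      ((v ⟨m + 1, hm⟩ : Fin n) : ℕ) with h | h | h
    · rw [invLen_mul_sT_of_lt hm v h]
    · have h2 : m = m + 1 := congrArg Fin.val (v.injective (Fin.ext h))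
      omega
    · have := invLen_mul_sT_of_gt hm v h
      omega
  · rw [sT_one' hm, mul_one]
    omega

theorem invLen_one' : invLen (1 : Equiv.Perm (Fin n)) = 0 := by
  show (Finset.univ.filter
      (fun p : Fin n × Fin n => p.1 < p.2 ∧ (1 : Equiv.Perm (Fin n)) p.2 < (1 : Equiv.Perm (Fin n)) p.1)).card = 0
  rw [Finset.card_eq_zero, Finset.filter_eq_empty_iff]
  rintro p -
  rintro ⟨h1, h2⟩
  simp only [Equiv.Perm.one_apply] at h2
  exact absurd h2 (lt_asymm h1)

theorem invLen_prod_le (ω : List ℕ) : invLen ((ω.map (sT n)).prod) ≤ ω.length := by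
  induction ω using List.reverseRecOn with
  | nil => simp only [List.map_nil, List.prod_nil, List.length_nil, invLen_one', le_refl]
  | append_singleton ω' m ih =>
    rw [List.map_append, List.prod_append, List.map_singleton, List.prod_singleton,
      List.length_append, List.length_singleton]
    calc invLen ((ω'.map (sT n)).prod * sT n m) ≤ invLen ((ω'.map (sT n)).prod) + 1 :=
          invLen_mul_sT_le m _
      _ ≤ ω'.length + 1 := Nat.add_le_add_right ih 1

/-- 321-avoidance. -/
def Avoids {n : ℕ} (w : Equiv.Perm (Fin n)) : Prop :=
  ∀ a b c : Fin n, a < b → b < c → ((w c : Fin n) : ℕ) < w b → ((w b : Fin n) : ℕ) < w a → False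

theorem card_filter_val_lt (k : ℕ) (hk : k ≤ n) :
    ((Finset.univ : Finset (Fin n)).filter fun x : Fin n => (x : ℕ) < k).card = k := by
  have he : ((Finset.univ : Finset (Fin n)).filter fun x : Fin n => (x : ℕ) < k)
      = Finset.map (Fin.castLEEmb hk) Finset.univ := by
    ext x
    rw [Finset.mem_filter, Finset.mem_map]
    constructor
    · intro hx
      exact ⟨⟨(x : ℕ), hx.2⟩, Finset.mem_univ _, Fin.ext rfl⟩
    · rintro ⟨y, -, rfl⟩
      exact ⟨Finset.mem_univ _, y.isLt⟩
  rw [he, Finset.card_map, Finset.card_univ, Fintype.card_fin]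

theorem card_filter_perm (w : Equiv.Perm (Fin n)) (P : Fin n → Prop) [DecidablePred P]
    [DecidablePred fun x => P (w x)] :
    ((Finset.univ : Finset (Fin n)).filter fun x : Fin n => P (w x)).card
      = (Finset.univ.filter P).card := by
  refine Finset.card_bij' (fun a _ => w a) (fun b _ => w⁻¹ b) ?_ ?_ ?_ ?_
  · intro a ha
    rw [Finset.mem_filter] at ha ⊢
    exact ⟨Finset.mem_univ _, ha.2⟩
  · intro b hb
    rw [Finset.mem_filter] at hb ⊢
    refine ⟨Finset.mem_univ _, ?_⟩
    rw [show w (w⁻¹ b) = b from w.apply_symm_apply b]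
    exact hb.2
  · intro a _
    exact w.symm_apply_apply a
  · intro b _
    exact w.apply_symm_apply b

theorem descent_bounds {m : ℕ} (hm : m + 1 < n) (w : Equiv.Perm (Fin n)) (hav : Avoids w)
    (hd : ((w ⟨m + 1, hm⟩ : Fin n) : ℕ) < w ⟨m, Nat.lt_of_succ_lt hm⟩) :
    ((w ⟨m + 1, hm⟩ : Fin n) : ℕ) ≤ m ∧ m < ((w ⟨m, Nat.lt_of_succ_lt hm⟩ : Fin n) : ℕ) := by
  constructor
  · by_contra hc
    push_neg at hc
    have hS : ((Finset.univ : Finset (Fin n)).filter fun x : Fin n => ((w x : Fin n) : ℕ) < m + 1).card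
        = m + 1 :=
      (card_filter_perm w (fun y => (y : ℕ) < m + 1)).trans (card_filter_val_lt (m + 1) hm.le)
    have hex : ∃ c : Fin n, ((w c : Fin n) : ℕ) < m + 1 ∧ m + 1 < (c : ℕ) := by
      by_contra hc2
      push_neg at hc2
      have hsub : ((Finset.univ : Finset (Fin n)).filter fun x : Fin n => ((w x : Fin n) : ℕ) < m + 1)
          ⊆ (Finset.univ.filter fun x : Fin n => (x : ℕ) < m) := by
        intro x hx
        rw [Finset.mem_filter] at hx ⊢
        obtain ⟨-, hx2⟩ := hx
        refine ⟨Finset.mem_univ _, ?_⟩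
        have h1 := hc2 x hx2
        have h2 : (x : ℕ) ≠ m := by
          intro he
          have hxe : x = ⟨m, Nat.lt_of_succ_lt hm⟩ := Fin.ext he
          rw [hxe] at hx2
          omega
        have h3 : (x : ℕ) ≠ m + 1 := by
          intro he
          have hxe : x = ⟨m + 1, hm⟩ := Fin.ext he
          rw [hxe] at hx2
          omega
        omega
      have hle := Finset.card_le_card hsub
      rw [hS, card_filter_val_lt m (by omega)] at hle
      omega
    obtain ⟨c, hc1, hc2⟩ := hex
    exact hav ⟨m, Nat.lt_of_succ_lt hm⟩ ⟨m + 1, hm⟩ c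
      (by rw [Fin.lt_def]; exact Nat.lt_succ_self m)
      (by rw [Fin.lt_def]; exact hc2) (by omega) hd
  · by_contra hc
    push_neg at hc
    have hS : ((Finset.univ : Finset (Fin n)).filter fun x : Fin n => ((w x : Fin n) : ℕ) < m + 1).card
        = m + 1 :=
      (card_filter_perm w (fun y => (y : ℕ) < m + 1)).trans (card_filter_val_lt (m + 1) hm.le)
    have htot := Finset.card_filter_add_card_filter_not
      (s := (Finset.univ : Finset (Fin n))) (fun x : Fin n => ((w x : Fin n) : ℕ) < m + 1)
    rw [hS, Finset.card_univ, Fintype.card_fin] at htot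
    have hex : ∃ a : Fin n, m + 1 ≤ ((w a : Fin n) : ℕ) ∧ (a : ℕ) < m := by
      by_contra hc2
      push_neg at hc2
      have hsub : ((Finset.univ : Finset (Fin n)).filter fun x : Fin n => ¬ ((w x : Fin n) : ℕ) < m + 1)
          ⊆ (Finset.univ.filter fun x : Fin n => ¬ (x : ℕ) < m + 2) := by
        intro x hx
        rw [Finset.mem_filter] at hx ⊢
        obtain ⟨-, hx2⟩ := hx
        refine ⟨Finset.mem_univ _, ?_⟩
        have h1 := hc2 x (by omega)
        have h2 : (x : ℕ) ≠ m := by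
          intro he
          have hxe : x = ⟨m, Nat.lt_of_succ_lt hm⟩ := Fin.ext he
          rw [hxe] at hx2
          omega
        have h3 : (x : ℕ) ≠ m + 1 := by
          intro he
          have hxe : x = ⟨m + 1, hm⟩ := Fin.ext he
          rw [hxe] at hx2
          omega
        omega
      have hle := Finset.card_le_card hsub
      have htot2 := Finset.card_filter_add_card_filter_not
        (s := (Finset.univ : Finset (Fin n))) (fun x : Fin n => (x : ℕ) < m + 2)
      rw [card_filter_val_lt (m + 2) (by omega), Finset.card_univ, Fintype.card_fin] at htot2
      omega
    obtain ⟨a, ha1, ha2⟩ := hex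
    exact hav a ⟨m, Nat.lt_of_succ_lt hm⟩ ⟨m + 1, hm⟩
      (by rw [Fin.lt_def]; exact ha2)
      (by rw [Fin.lt_def]; exact Nat.lt_succ_self m) hd (by omega)

theorem count_eq_card (ω : List ℕ) :
    ∀ w : Equiv.Perm (Fin n), (ω.map (sT n)).prod = w → ω.length = invLen w → Avoids w →
    ∀ j : ℕ, ω.count j =
      (Finset.univ.filter fun a : Fin n => (a : ℕ) ≤ j ∧ j < ((w a : Fin n) : ℕ)).card := by
  induction ω using List.reverseRecOn with
  | nil =>
    intro w hp hl hav j
    rw [← hp]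
    simp only [List.map_nil, List.prod_nil, List.count_nil]
    rw [eq_comm, Finset.card_eq_zero, Finset.filter_eq_empty_iff]
    rintro a -
    simp only [Equiv.Perm.one_apply]
    omega
  | append_singleton ω' m ih =>
    intro w hp hl hav j
    rw [List.map_append, List.prod_append, List.map_singleton, List.prod_singleton] at hp
    rw [List.length_append, List.length_singleton] at hl
    set v : Equiv.Perm (Fin n) := (ω'.map (sT n)).prod with hvdef
    have hb1 : invLen v ≤ ω'.length := invLen_prod_le ω'
    have hb2 : invLen w ≤ invLen v + 1 := by
      rw [← hp]; exact invLen_mul_sT_le m v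
    have hlv : invLen v = ω'.length := by omega
    have hm : m + 1 < n := by
      by_contra hc
      rw [sT_one' hc, mul_one] at hp
      rw [hp] at hb1
      omega
    have hsM : sT n m ⟨m, Nat.lt_of_succ_lt hm⟩ = ⟨m + 1, hm⟩ := by
      rw [sT_eq hm]; exact Equiv.swap_apply_left _ _
    have hsM' : sT n m ⟨m + 1, hm⟩ = ⟨m, Nat.lt_of_succ_lt hm⟩ := by
      rw [sT_eq hm]; exact Equiv.swap_apply_right _ _
    have hss : ∀ x : Fin n, sT n m (sT n m x) = x := sT_apply_self m
    have hvM : ((v ⟨m, Nat.lt_of_succ_lt hm⟩ : Fin n) : ℕ) < v ⟨m + 1, hm⟩ := by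
      rcases Nat.lt_trichotomy ((v ⟨m, Nat.lt_of_succ_lt hm⟩ : Fin n) : ℕ)
        ((v ⟨m + 1, hm⟩ : Fin n) : ℕ) with h | h | h
      · exact h
      · have h2 : m = m + 1 := congrArg Fin.val (v.injective (Fin.ext h))
        omega
      · exfalso
        have h2 := invLen_mul_sT_of_gt hm v h
        rw [hp] at h2
        omega
    have hwv : ∀ x, w x = v (sT n m x) := by
      intro x
      rw [← hp]
      rfl
    have hvw : ∀ x, v x = w (sT n m x) := by
      intro x
      rw [hwv, hss]
    have hdesc : ((w ⟨m + 1, hm⟩ : Fin n) : ℕ) < w ⟨m, Nat.lt_of_succ_lt hm⟩ := by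
      rw [hwv, hwv, hsM, hsM']
      exact hvM
    have havv : Avoids v := by
      intro a b c hab hbc h1 h2
      by_cases hA : (a : ℕ) = m ∧ (b : ℕ) = m + 1
      · obtain ⟨ha, hb⟩ := hA
        have ha' : a = ⟨m, Nat.lt_of_succ_lt hm⟩ := Fin.ext ha
        have hb' : b = ⟨m + 1, hm⟩ := Fin.ext hb
        rw [ha', hb'] at h2
        rw [hvw, hvw, hsM, hsM'] at h2
        omega
      · by_cases hB : (b : ℕ) = m ∧ (c : ℕ) = m + 1
        · obtain ⟨hb, hc⟩ := hB
          have hb' : b = ⟨m, Nat.lt_of_succ_lt hm⟩ := Fin.ext hb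
          have hc' : c = ⟨m + 1, hm⟩ := Fin.ext hc
          rw [hb', hc'] at h1
          rw [hvw, hvw, hsM, hsM'] at h1
          omega
        · refine hav (sT n m a) (sT n m b) (sT n m c) (sT_lt hm hab hA) (sT_lt hm hbc hB) ?_ ?_
          · rw [← hvw, ← hvw]
            exact h1
          · rw [← hvw, ← hvw]
            exact h2
    have IH := ih v rfl hlv.symm havv
    rw [List.count_append]
    rcases Nat.lt_trichotomy j m with hj | hj | hj
    · have hfe : (Finset.univ.filter fun a : Fin n => (a : ℕ) ≤ j ∧ j < ((w a : Fin n) : ℕ))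
          = Finset.univ.filter fun a : Fin n => (a : ℕ) ≤ j ∧ j < ((v a : Fin n) : ℕ) := by
        ext x
        rw [Finset.mem_filter, Finset.mem_filter]
        have hsa : (x : ℕ) ≤ j → sT n m x = x := by
          intro hxj
          rw [sT_eq hm]
          exact Equiv.swap_apply_of_ne_of_ne
            (Fin.ne_of_val_ne (show (x : ℕ) ≠ m by omega))
            (Fin.ne_of_val_ne (show (x : ℕ) ≠ m + 1 by omega))
        constructor
        · rintro ⟨-, h1, h2⟩
          refine ⟨Finset.mem_univ _, h1, ?_⟩
          rw [hvw x, hsa h1]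
          exact h2
        · rintro ⟨-, h1, h2⟩
          rw [hvw x, hsa h1] at h2
          exact ⟨Finset.mem_univ _, h1, h2⟩
      rw [hfe, ← IH j, List.count_singleton', if_neg (by omega)]
      omega
    · subst hj
      have hdb := descent_bounds hm w hav hdesc
      have hfe : (Finset.univ.filter fun a : Fin n => (a : ℕ) ≤ j ∧ j < ((w a : Fin n) : ℕ))
          = insert (⟨j, Nat.lt_of_succ_lt hm⟩ : Fin n)
            (Finset.univ.filter fun a : Fin n => (a : ℕ) ≤ j ∧ j < ((v a : Fin n) : ℕ)) := by
        ext a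
        rw [Finset.mem_insert, Finset.mem_filter, Finset.mem_filter]
        constructor
        · rintro ⟨-, haj, hwa⟩
          by_cases ham : (a : ℕ) = j
          · exact Or.inl (Fin.ext ham)
          · refine Or.inr ⟨Finset.mem_univ _, haj, ?_⟩
            have hsa : sT n j a = a := by
              rw [sT_eq hm]
              exact Equiv.swap_apply_of_ne_of_ne (Fin.ne_of_val_ne ham)
                (Fin.ne_of_val_ne (show (a : ℕ) ≠ j + 1 by omega))
            rw [hvw a, hsa]
            exact hwa
        · rintro (rfl | ⟨-, haj, hva⟩)
          · exact ⟨Finset.mem_univ _, le_refl j, hdb.2⟩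
          · refine ⟨Finset.mem_univ _, haj, ?_⟩
            by_cases ham : (a : ℕ) = j
            · exfalso
              have ha' : a = ⟨j, Nat.lt_of_succ_lt hm⟩ := Fin.ext ham
              rw [ha', hvw, hsM] at hva
              omega
            · have hsa : sT n j a = a := by
                rw [sT_eq hm]
                exact Equiv.swap_apply_of_ne_of_ne (Fin.ne_of_val_ne ham)
                  (Fin.ne_of_val_ne (show (a : ℕ) ≠ j + 1 by omega))
              rw [hvw a, hsa] at hva
              exact hva
      have hMnot : (⟨j, Nat.lt_of_succ_lt hm⟩ : Fin n) ∉
          (Finset.univ.filter fun a : Fin n => (a : ℕ) ≤ j ∧ j < ((v a : Fin n) : ℕ)) := by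
        rw [Finset.mem_filter]
        rintro ⟨-, -, hx⟩
        rw [hvw, hsM] at hx
        omega
      rw [hfe, Finset.card_insert_of_notMem hMnot, ← IH j, List.count_singleton', if_pos rfl]
    · have hfe : (Finset.univ.filter fun a : Fin n => (a : ℕ) ≤ j ∧ j < ((w a : Fin n) : ℕ)).card
          = (Finset.univ.filter fun a : Fin n => (a : ℕ) ≤ j ∧ j < ((v a : Fin n) : ℕ)).card := by
        refine Finset.card_bij' (fun a _ => sT n m a) (fun a _ => sT n m a) ?_ ?_ ?_ ?_
        · intro a ha
          rw [Finset.mem_filter] at ha ⊢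
          obtain ⟨-, h1, h2⟩ := ha
          refine ⟨Finset.mem_univ _, ?_, ?_⟩
          · show ((sT n m a : Fin n) : ℕ) ≤ j
            have hval := sT_val hm a
            split_ifs at hval <;> omega
          · show j < ((v (sT n m a) : Fin n) : ℕ)
            rw [hvw, hss]
            exact h2
        · intro a ha
          rw [Finset.mem_filter] at ha ⊢
          obtain ⟨-, h1, h2⟩ := ha
          refine ⟨Finset.mem_univ _, ?_, ?_⟩
          · show ((sT n m a : Fin n) : ℕ) ≤ j
            have hval := sT_val hm a
            split_ifs at hval <;> omega
          · show j < ((w (sT n m a) : Fin n) : ℕ)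
            rw [hwv, hss]
            exact h2
        · intro a _
          exact hss a
        · intro a _
          exact hss a
      rw [hfe, ← IH j, List.count_singleton', if_neg (by omega)]
      omega

theorem exists_adjacent_descent (w : Equiv.Perm (Fin n)) :
    ∀ k : ℕ, ∀ a b : Fin n, (b : ℕ) = (a : ℕ) + k + 1 → ((w b : Fin n) : ℕ) < w a →
    ∃ m : ℕ, ∃ h : m + 1 < n, (a : ℕ) ≤ m ∧ m + 1 ≤ (b : ℕ) ∧
      ((w ⟨m + 1, h⟩ : Fin n) : ℕ) < w ⟨m, Nat.lt_of_succ_lt h⟩ := by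
  intro k
  induction k with
  | zero =>
    intro a b hba hw
    have hbn : (a : ℕ) + 1 < n := by have := b.isLt; omega
    refine ⟨(a : ℕ), hbn, le_refl _, by omega, ?_⟩
    have e1 : (⟨(a : ℕ) + 1, hbn⟩ : Fin n) = b := Fin.ext (show (a : ℕ) + 1 = (b : ℕ) by omega)
    have e2 : (⟨(a : ℕ), Nat.lt_of_succ_lt hbn⟩ : Fin n) = a := Fin.ext rfl
    rw [e1, e2]
    exact hw
  | succ k ihk =>
    intro a b hba hw
    have hb' : (a : ℕ) + k + 1 < n := by have := b.isLt; omega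
    by_cases hcmp : ((w b : Fin n) : ℕ) < w (⟨(a : ℕ) + k + 1, hb'⟩ : Fin n)
    · have hbn : (a : ℕ) + k + 1 + 1 < n := by have := b.isLt; omega
      refine ⟨(a : ℕ) + k + 1, hbn, by omega, by omega, ?_⟩
      have e1 : (⟨(a : ℕ) + k + 1 + 1, hbn⟩ : Fin n) = b :=
        Fin.ext (show (a : ℕ) + k + 1 + 1 = (b : ℕ) by omega)
      have e2 : (⟨(a : ℕ) + k + 1, Nat.lt_of_succ_lt hbn⟩ : Fin n)
          = (⟨(a : ℕ) + k + 1, hb'⟩ : Fin n) := rfl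
      rw [e1, e2]
      exact hcmp
    · push_neg at hcmp
      have hlt : ((w (⟨(a : ℕ) + k + 1, hb'⟩ : Fin n) : Fin n) : ℕ) < w a := by omega
      obtain ⟨m, hmn, h1, h2, h3⟩ := ihk a ⟨(a : ℕ) + k + 1, hb'⟩ rfl hlt
      exact ⟨m, hmn, h1, by simp at h2; omega, h3⟩

theorem minRep_ascent {i : ℕ} {w : Equiv.Perm (Fin n)} (hw : w ∈ minRep n i) {m : ℕ}
    (hm : m + 1 < n) (hne : m + 1 ≠ i) :
    ((w ⟨m, Nat.lt_of_succ_lt hm⟩ : Fin n) : ℕ) < w ⟨m + 1, hm⟩ := by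
  have h := hw m hm hne
  rcases Nat.lt_trichotomy ((w ⟨m, Nat.lt_of_succ_lt hm⟩ : Fin n) : ℕ)
    ((w ⟨m + 1, hm⟩ : Fin n) : ℕ) with h1 | h1 | h1
  · exact h1
  · have h2 : m = m + 1 := congrArg Fin.val (w.injective (Fin.ext h1))
    omega
  · have h2 := invLen_mul_sT_of_gt hm w h1
    omega

theorem minRep_avoids {i : ℕ} {w : Equiv.Perm (Fin n)} (hw : w ∈ minRep n i) : Avoids w := by
  intro a b c hab hbc h1 h2
  rw [Fin.lt_def] at hab hbc
  obtain ⟨m₁, hm₁, ha1, hb1, hd1⟩ :=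
    exists_adjacent_descent w ((b : ℕ) - (a : ℕ) - 1) a b (by omega) h2
  obtain ⟨m₂, hm₂, ha2, hb2, hd2⟩ :=
    exists_adjacent_descent w ((c : ℕ) - (b : ℕ) - 1) b c (by omega) h1
  have e1 : m₁ + 1 = i := by
    by_contra hne
    have := minRep_ascent hw hm₁ hne
    omega
  have e2 : m₂ + 1 = i := by
    by_contra hne
    have := minRep_ascent hw hm₂ hne
    omega
  omega

end Aux

/-- for `w ∈ W^I`, the number of occurrences of each simple reflection in a
reduced expression of `w` is independent of the chosen reduced expression. -/
theorem rex_count_welldefined (n i : ℕ) (hi1 : 1 ≤ i) (hi2 : i < n)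
    (w : Equiv.Perm (Fin n)) (hw : w ∈ minRep n i)
    (ω₁ ω₂ : List ℕ)
    (h₁v : ∀ m ∈ ω₁, m + 1 < n) (h₂v : ∀ m ∈ ω₂, m + 1 < n)
    (h₁p : (ω₁.map (sT n)).prod = w) (h₂p : (ω₂.map (sT n)).prod = w)
    (h₁l : ω₁.length = invLen w) (h₂l : ω₂.length = invLen w) :
    ∀ j : ℕ, ω₁.count j = ω₂.count j := by
  have hav : Avoids w := minRep_avoids hw
  intro j
  rw [count_eq_card ω₁ w h₁p h₁l hav j, count_eq_card ω₂ w h₂p h₂l hav j]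
end
end

section
/- Let w ∈ W^I ⊆ S_n have a valley at j, with λ^w_a = ⋯ = λ^w_j = ↘ and λ^w_{j+1} = ⋯ = λ^w_b = ↗ (so a ≤ j < b are maximal such runs). If v ∈ W^I with v < w, then for every x in the parabolic subgroup W_{[a,b−1]} generated by {s_a, …, s_{b−1}} one has x·v ≱ w in Bruhat order. -/
open scoped Classical

noncomputable section

theorem Equiv.Perm.apply_inv_self {α : Type*} (f : Equiv.Perm α) (x : α) : f (f⁻¹ x) = x :=
  Equiv.apply_symm_apply f x

theorem Equiv.Perm.inv_apply_self {α : Type*} (f : Equiv.Perm α) (x : α) : f⁻¹ (f x) = x :=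
  Equiv.symm_apply_apply f x

namespace ValleyAux

open Finset Equiv

/-- The inversion set of a permutation. -/
def Inv {n : ℕ} (u : Equiv.Perm (Fin n)) : Finset (Fin n × Fin n) :=
  Finset.univ.filter fun p => p.1 < p.2 ∧ u p.2 < u p.1

lemma invLen_eq {n : ℕ} (u : Equiv.Perm (Fin n)) : invLen u = (Inv u).card := rfl

lemma invLen_le_inv {n : ℕ} (u : Equiv.Perm (Fin n)) : invLen u ≤ invLen u⁻¹ := by
  rw [invLen_eq, invLen_eq]
  apply Finset.card_le_card_of_injOn (fun z => (u z.2, u z.1))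
  · intro z hz
    simp only [Inv, Finset.mem_coe, Finset.mem_filter, Finset.mem_univ, true_and] at hz ⊢
    exact ⟨hz.2, by simp [hz.1]⟩
  · intro z1 h1 z2 h2 h
    simp only [Prod.mk.injEq] at h
    have e1 : z1.1 = z2.1 := u.injective h.2
    have e2 : z1.2 = z2.2 := u.injective h.1
    exact Prod.ext e1 e2

lemma invLen_inv {n : ℕ} (u : Equiv.Perm (Fin n)) : invLen u⁻¹ = invLen u := by
  refine le_antisymm ?_ (invLen_le_inv u)
  simpa using invLen_le_inv u⁻¹

/-- Master length lemma: multiplying on the right by `swap p q` with `p < q` and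
`u p < u q` strictly increases the inversion number. -/
lemma invLen_lt_mul_swap {n : ℕ} (u : Equiv.Perm (Fin n)) (p q : Fin n)
    (hpq : p < q) (huv : u p < u q) :
    invLen u < invLen (u * Equiv.swap p q) := by
  set v := Equiv.swap p q with hv
  have hvv : ∀ z : Fin n, v (v z) = z := fun z => Equiv.swap_apply_self p q z
  have hvp : v p = q := Equiv.swap_apply_left p q
  have hvq : v q = p := Equiv.swap_apply_right p q
  have hmemB : (p, q) ∈ Inv (u * v) := by
    simp only [Inv, Finset.mem_filter, Finset.mem_univ, true_and]
    exact ⟨hpq, by simp [Equiv.Perm.mul_apply, hvp, hvq, huv]⟩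
  set ψ : Fin n × Fin n → Fin n × Fin n := fun z => if v z.1 < v z.2 then (v z.1, v z.2) else z
    with hψ
  have hmaps : ∀ z ∈ Inv u, ψ z ∈ (Inv (u * v)).erase (p, q) := by
    intro z hz
    simp only [Inv, Finset.mem_filter, Finset.mem_univ, true_and] at hz
    obtain ⟨h1, h2⟩ := hz
    by_cases hc : v z.1 < v z.2
    · have hmem : ψ z ∈ Inv (u * v) := by
        simp only [hψ, if_pos hc, Inv, Finset.mem_filter, Finset.mem_univ, true_and]
        exact ⟨hc, by simp [Equiv.Perm.mul_apply, hvv, h2]⟩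
      refine Finset.mem_erase.2 ⟨?_, hmem⟩
      simp only [hψ, if_pos hc]
      intro e
      have e1 : v z.1 = p := congrArg Prod.fst e
      have e2 : v z.2 = q := congrArg Prod.snd e
      rw [← hvv z.1, e1, hvp] at h1
      rw [← hvv z.2, e2, hvq] at h1
      exact absurd h1 (not_lt.2 hpq.le)
    · -- flipped pair: ψ z = z
      have hne : v z.1 ≠ v z.2 := fun h => (h1.ne (v.injective h)).elim
      have hflip : v z.2 < v z.1 := (hne.lt_or_gt.resolve_left hc)
      have key : u (v z.2) < u (v z.1) := by
        -- case analysis on which endpoints are p or q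
        by_cases e1p : z.1 = p
        · by_cases e2q : z.2 = q
          · exfalso; rw [e1p, e2q] at h2; exact absurd huv (not_lt.2 h2.le)
          · have e2 : v z.2 = z.2 := by
              apply Equiv.swap_apply_of_ne_of_ne
              · intro h; rw [e1p, h] at h1; exact lt_irrefl _ h1
              · exact e2q
            rw [e1p, hvp, e2]
            exact lt_trans (by rw [e1p] at h2; exact h2) huv
        · by_cases e2q : z.2 = q
          · have e1 : v z.1 = z.1 := by
              apply Equiv.swap_apply_of_ne_of_ne e1p
              intro h; rw [e2q, h] at h1; exact lt_irrefl _ h1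
            rw [e2q, hvq, e1]
            exact lt_trans huv (by rw [e2q] at h2; exact h2)
          · exfalso
            -- then neither endpoint moved in a flipping way: contradiction with hflip
            by_cases e1q : z.1 = q
            · have e2 : v z.2 = z.2 := by
                apply Equiv.swap_apply_of_ne_of_ne
                · intro h; rw [h] at h1; exact absurd (lt_trans h1 hpq) (by rw [e1q]; exact lt_irrefl _)
                · exact e2q
              rw [e1q, hvq, e2] at hflip
              have hq2 : q < z.2 := by rw [← e1q]; exact h1
              exact absurd (lt_trans hq2 (lt_trans hflip hpq)) (lt_irrefl q)
            · by_cases e2p : z.2 = p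
              · have e1 : v z.1 = z.1 := Equiv.swap_apply_of_ne_of_ne e1p e1q
                rw [e2p, hvp, e1] at hflip
                have : z.1 < p := by rw [← e2p]; exact h1
                exact absurd (lt_trans hpq hflip) (not_lt.2 this.le)
              · have e1 : v z.1 = z.1 := Equiv.swap_apply_of_ne_of_ne e1p e1q
                have e2 : v z.2 = z.2 := Equiv.swap_apply_of_ne_of_ne e2p e2q
                rw [e1, e2] at hflip
                exact absurd h1 (not_lt.2 hflip.le)
      refine Finset.mem_erase.2 ⟨?_, ?_⟩
      · simp only [hψ, if_neg hc]
        intro h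
        have hz1 : z.1 = p := congrArg Prod.fst h
        have hz2 : z.2 = q := congrArg Prod.snd h
        rw [hz1, hz2] at h2
        exact absurd huv (not_lt.2 h2.le)
      · simp only [hψ, if_neg hc, Inv, Finset.mem_filter, Finset.mem_univ, true_and]
        exact ⟨h1, by simpa [Equiv.Perm.mul_apply] using key⟩
  have hinj : Set.InjOn ψ (Inv u) := by
    intro z1 hz1 z2 hz2 h
    simp only [Finset.coe_filter, Inv, Set.mem_setOf_eq, Finset.mem_univ] at hz1 hz2
    by_cases c1 : v z1.1 < v z1.2 <;> by_cases c2 : v z2.1 < v z2.2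
    · simp only [hψ, if_pos c1, if_pos c2, Prod.mk.injEq] at h
      exact Prod.ext (v.injective h.1) (v.injective h.2)
    · simp only [hψ, if_pos c1, if_neg c2] at h
      exfalso
      have e1 : v z2.1 = v (v z1.1) := by rw [congrArg Prod.fst h.symm]
      have e2 : v z2.2 = v (v z1.2) := by rw [congrArg Prod.snd h.symm]
      rw [e1, e2, hvv, hvv] at c2
      exact c2 (hz1.2.1)
    · simp only [hψ, if_neg c1, if_pos c2] at h
      exfalso
      have e1 : v z1.1 = v (v z2.1) := by rw [congrArg Prod.fst h]
      have e2 : v z1.2 = v (v z2.2) := by rw [congrArg Prod.snd h]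
      rw [e1, e2, hvv, hvv] at c1
      exact c1 (hz2.2.1)
    · simpa [hψ, if_neg c1, if_neg c2] using h
  calc invLen u = (Inv u).card := invLen_eq u
    _ ≤ ((Inv (u * v)).erase (p, q)).card := Finset.card_le_card_of_injOn ψ hmaps hinj
    _ < (Inv (u * v)).card := Finset.card_erase_lt_of_mem hmemB
    _ = invLen (u * v) := (invLen_eq _).symm

end ValleyAux

namespace ValleyAux

/-- The number of `k < c` with `u⁻¹ k < i` (i.e. down-steps of `λ^u` before `c`). -/
def Ni (n i : ℕ) (c : ℕ) (u : Equiv.Perm (Fin n)) : ℕ :=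
  (Finset.univ.filter fun k : Fin n => (k : ℕ) < c ∧ ((u⁻¹ k : Fin n) : ℕ) < i).card

lemma Ni_split (n i : ℕ) (c c' : ℕ) (hcc : c ≤ c') (u : Equiv.Perm (Fin n)) :
    Ni n i c' u = Ni n i c u +
      (Finset.univ.filter fun k : Fin n =>
        c ≤ (k : ℕ) ∧ (k : ℕ) < c' ∧ ((u⁻¹ k : Fin n) : ℕ) < i).card := by
  rw [Ni, Ni, ← Finset.card_union_of_disjoint]
  · congr 1
    ext k
    simp only [Finset.mem_filter, Finset.mem_univ, true_and, Finset.mem_union]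
    by_cases hP : ((u⁻¹ k : Fin n) : ℕ) < i <;> simp [hP] <;> omega
  · rw [Finset.disjoint_left]
    intro k h1 h2
    simp only [Finset.mem_filter, Finset.mem_univ, true_and] at h1 h2
    omega

lemma Ni_mono (n i : ℕ) (c c' : ℕ) (hcc : c ≤ c') (u : Equiv.Perm (Fin n)) :
    Ni n i c u ≤ Ni n i c' u := by
  rw [Ni_split n i c c' hcc u]; exact Nat.le_add_right _ _

lemma Ni_le_add (n i : ℕ) (c c' : ℕ) (hcc : c ≤ c') (u : Equiv.Perm (Fin n)) :
    Ni n i c' u ≤ Ni n i c u + (c' - c) := by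
  rw [Ni_split n i c c' hcc u]
  apply Nat.add_le_add_left
  calc (Finset.univ.filter fun k : Fin n =>
        c ≤ (k : ℕ) ∧ (k : ℕ) < c' ∧ ((u⁻¹ k : Fin n) : ℕ) < i).card
      ≤ (Finset.Ico c c').card := by
        apply Finset.card_le_card_of_injOn (fun k : Fin n => (k : ℕ))
        · intro k hk
          simp only [Finset.mem_coe, Finset.mem_filter, Finset.mem_univ, true_and] at hk
          exact Finset.mem_Ico.2 ⟨hk.1, hk.2.1⟩
        · intro k1 _ k2 _ h; exact Fin.ext h
    _ = c' - c := Nat.card_Ico c c'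

/-- If the path of `u` is all down-steps on `[c,c')`, the count increases by exactly `c' - c`. -/
lemma Ni_run_true (n i : ℕ) (c c' : ℕ) (hcc : c ≤ c') (hc'n : c' ≤ n)
    (u : Equiv.Perm (Fin n))
    (h : ∀ k : Fin n, c ≤ (k : ℕ) → (k : ℕ) < c' → ((u⁻¹ k : Fin n) : ℕ) < i) :
    Ni n i c' u = Ni n i c u + (c' - c) := by
  rw [Ni_split n i c c' hcc u]
  congr 1
  have hIco : (Finset.Ico c c').card = c' - c := Nat.card_Ico c c'
  have hle : (Finset.univ.filter fun k : Fin n =>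
      c ≤ (k : ℕ) ∧ (k : ℕ) < c' ∧ ((u⁻¹ k : Fin n) : ℕ) < i).card ≤ (Finset.Ico c c').card := by
    apply Finset.card_le_card_of_injOn (fun k : Fin n => (k : ℕ))
    · intro k hk
      simp only [Finset.mem_coe, Finset.mem_filter, Finset.mem_univ, true_and] at hk
      exact Finset.mem_Ico.2 ⟨hk.1, hk.2.1⟩
    · intro k1 _ k2 _ hh; exact Fin.ext hh
  have hge : (Finset.Ico c c').card ≤ (Finset.univ.filter fun k : Fin n =>
      c ≤ (k : ℕ) ∧ (k : ℕ) < c' ∧ ((u⁻¹ k : Fin n) : ℕ) < i).card := by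
    rcases Nat.eq_zero_or_pos n with rfl | hn
    · have hc'0 : c' = 0 := Nat.le_zero.1 hc'n
      subst hc'0
      have hc0 : c = 0 := Nat.le_zero.1 hcc
      subst hc0
      simp
    apply Finset.card_le_card_of_injOn (fun m => (⟨min m (n-1), by omega⟩ : Fin n))
    · intro m hm
      have hm' := Finset.mem_Ico.1 hm
      have hmn : m < n := lt_of_lt_of_le hm'.2 hc'n
      have hmin : min m (n-1) = m := by omega
      simp only [Finset.mem_coe, Finset.mem_filter, Finset.mem_univ, true_and, hmin]
      refine ⟨hm'.1, hm'.2, h _ ?_ ?_⟩ <;> simp [hmin, hm'.1, hm'.2]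
    · intro m1 hm1 m2 hm2 hh
      have h1 := Finset.mem_Ico.1 hm1
      have h2 := Finset.mem_Ico.1 hm2
      simp only [Fin.mk.injEq] at hh
      omega
  omega

/-- If the path of `u` is all up-steps on `[c,c')`, the count is unchanged. -/
lemma Ni_run_false (n i : ℕ) (c c' : ℕ) (hcc : c ≤ c')
    (u : Equiv.Perm (Fin n))
    (h : ∀ k : Fin n, c ≤ (k : ℕ) → (k : ℕ) < c' → ¬ ((u⁻¹ k : Fin n) : ℕ) < i) :
    Ni n i c' u = Ni n i c u := by
  rw [Ni_split n i c c' hcc u]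
  convert (Nat.add_zero _)
  rw [Finset.card_eq_zero]
  ext k
  simp only [Finset.mem_filter, Finset.mem_univ, true_and, Finset.notMem_empty, iff_false]
  rintro ⟨h1, h2, h3⟩
  exact h k h1 h2 h3

/-- A single Bruhat step lowers (weakly) every count `Ni`. -/
lemma step_Ni_aux (n i : ℕ) (a' : Equiv.Perm (Fin n)) (p q : Fin n) (hpq : p < q)
    (hlen : invLen a' < invLen (Equiv.swap p q * a')) (c : ℕ) :
    Ni n i c (Equiv.swap p q * a') ≤ Ni n i c a' := by
  set b' := Equiv.swap p q * a' with hb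
  have hbinv : ∀ k : Fin n, b'⁻¹ k = a'⁻¹ (Equiv.swap p q k) := by
    intro k
    rw [hb, mul_inv_rev, Equiv.Perm.mul_apply, Equiv.swap_inv]
  by_cases hp : ((a'⁻¹ p : Fin n) : ℕ) < i <;> by_cases hq : ((a'⁻¹ q : Fin n) : ℕ) < i
  · -- both down: sets equal
    apply le_of_eq
    unfold Ni
    congr 1
    apply Finset.filter_congr
    intro k _
    rw [hbinv k]
    have hpq' : (((a'⁻¹ p : Fin n)) : ℕ) < i ↔ (((a'⁻¹ q : Fin n)) : ℕ) < i :=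
      iff_of_true hp hq
    rcases eq_or_ne k p with rfl | hkp
    · rw [Equiv.swap_apply_left]; exact and_congr_right fun _ => hpq'.symm
    rcases eq_or_ne k q with rfl | hkq
    · rw [Equiv.swap_apply_right]; exact and_congr_right fun _ => hpq'
    · rw [Equiv.swap_apply_of_ne_of_ne hkp hkq]
  · -- p down, q up : inject by sending q to p
    unfold Ni
    apply Finset.card_le_card_of_injOn (fun k => if k = q then p else k)
    · intro k hk
      simp only [Finset.mem_coe, Finset.mem_filter, Finset.mem_univ, true_and] at hk
      obtain ⟨hkc, hkd⟩ := hk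
      rw [hbinv k] at hkd
      rcases eq_or_ne k q with rfl | hkq
      · simp only [if_pos rfl, Finset.mem_coe, Finset.mem_filter, Finset.mem_univ, true_and]
        exact ⟨lt_of_le_of_lt (Nat.le_of_lt (show (p:ℕ) < (k:ℕ) from hpq)) hkc, hp⟩
      · rcases eq_or_ne k p with rfl | hkp
        · rw [Equiv.swap_apply_left] at hkd
          exact absurd hkd hq
        · rw [Equiv.swap_apply_of_ne_of_ne hkp hkq] at hkd
          simp only [if_neg hkq, Finset.mem_coe, Finset.mem_filter, Finset.mem_univ, true_and]
          exact ⟨hkc, hkd⟩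
    · intro k1 hk1 k2 hk2 hh
      simp only [Finset.coe_filter, Set.mem_setOf_eq, Finset.mem_univ, true_and] at hk1 hk2
      have hnp : ∀ k : Fin n, ((k:ℕ) < c ∧ ((b'⁻¹ k : Fin n):ℕ) < i) → k ≠ p := by
        intro k hk hkp
        subst hkp
        rw [hbinv k, Equiv.swap_apply_left] at hk
        exact hq hk.2
      have hh' : (if k1 = q then p else k1) = (if k2 = q then p else k2) := hh
      by_cases c1 : k1 = q <;> by_cases c2 : k2 = q
      · rw [c1, c2]
      · rw [if_pos c1, if_neg c2] at hh'
        exact absurd hh'.symm (hnp k2 hk2)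
      · rw [if_neg c1, if_pos c2] at hh'
        exact absurd hh' (hnp k1 hk1)
      · rwa [if_neg c1, if_neg c2] at hh'
  · -- p up, q down : contradicts length increase
    exfalso
    have h1 : b'⁻¹ p < b'⁻¹ q := by
      rw [hbinv p, hbinv q, Equiv.swap_apply_left, Equiv.swap_apply_right]
      exact Fin.lt_def.2 (lt_of_lt_of_le hq (le_trans (Nat.le_of_not_lt hp) (le_refl _)))
    have h2 := invLen_lt_mul_swap b'⁻¹ p q hpq h1
    have h3 : b'⁻¹ * Equiv.swap p q = a'⁻¹ := by
      rw [hb, mul_inv_rev, Equiv.swap_inv, mul_assoc, Equiv.swap_mul_self, mul_one]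
    rw [h3, invLen_inv, invLen_inv] at h2
    exact absurd hlen (not_lt.2 h2.le)
  · -- both up: sets equal
    apply le_of_eq
    unfold Ni
    congr 1
    apply Finset.filter_congr
    intro k _
    rw [hbinv k]
    have hpq' : (((a'⁻¹ p : Fin n)) : ℕ) < i ↔ (((a'⁻¹ q : Fin n)) : ℕ) < i :=
      iff_of_false hp hq
    rcases eq_or_ne k p with rfl | hkp
    · rw [Equiv.swap_apply_left]; exact and_congr_right fun _ => hpq'.symm
    rcases eq_or_ne k q with rfl | hkq
    · rw [Equiv.swap_apply_right]; exact and_congr_right fun _ => hpq'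
    · rw [Equiv.swap_apply_of_ne_of_ne hkp hkq]

lemma step_Ni (n i : ℕ) (a' b' : Equiv.Perm (Fin n))
    (hstep : (∃ x y : Fin n, x ≠ y ∧ b' = Equiv.swap x y * a') ∧ invLen a' < invLen b')
    (c : ℕ) : Ni n i c b' ≤ Ni n i c a' := by
  obtain ⟨⟨x, y, hxy, rfl⟩, hlen⟩ := hstep
  rcases hxy.lt_or_gt with h | h
  · exact step_Ni_aux n i a' x y h hlen c
  · rw [Equiv.swap_comm] at hlen ⊢
    exact step_Ni_aux n i a' y x h hlen c

/-- Bruhat order implies pointwise comparison of the counts. -/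
lemma bruhat_Ni (n i : ℕ) (v w : Equiv.Perm (Fin n)) (h : bruhatLE v w) (c : ℕ) :
    Ni n i c w ≤ Ni n i c v := by
  induction h with
  | refl => exact le_refl _
  | tail _ hstep ih => exact le_trans (step_Ni n i _ _ hstep c) ih

end ValleyAux

namespace ValleyAux

lemma sT_apply_ne (n m : ℕ) (hm : m + 1 < n) (k : Fin n)
    (h1 : (k : ℕ) ≠ m) (h2 : (k : ℕ) ≠ m + 1) : sT n m k = k := by
  rw [sT, dif_pos hm]
  apply Equiv.swap_apply_of_ne_of_ne
  · intro h; exact h1 (congrArg Fin.val h)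
  · intro h; exact h2 (congrArg Fin.val h)

/-- Elements of `W_I` preserve the predicate `k < i`. -/
lemma WI_preserves {n i : ℕ} (u : Equiv.Perm (Fin n)) (hu : u ∈ WIsub n i) :
    ∀ k : Fin n, ((u k : Fin n) : ℕ) < i ↔ (k : ℕ) < i := by
  rw [WIsub] at hu
  induction hu using Subgroup.closure_induction with
  | mem g hg =>
    obtain ⟨m, hm, hmi, rfl⟩ := hg
    intro k
    rcases eq_or_ne (k : ℕ) m with hk | hk
    · have hkeq : k = ⟨m, Nat.lt_of_succ_lt hm⟩ := Fin.ext hk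
      rw [hkeq, sT, dif_pos hm, Equiv.swap_apply_left]
      simp only [Fin.val_mk]
      omega
    · rcases eq_or_ne (k : ℕ) (m + 1) with hk' | hk'
      · have hkeq : k = ⟨m + 1, hm⟩ := Fin.ext hk'
        rw [hkeq, sT, dif_pos hm, Equiv.swap_apply_right]
        simp only [Fin.val_mk]
        omega
      · rw [sT_apply_ne n m hm k hk hk']
  | one => intro k; simp
  | mul g h _ _ ihg ihh =>
    intro k
    rw [Equiv.Perm.mul_apply, ihg (h k), ihh k]
  | inv g _ ihg =>
    intro k
    have := ihg (g⁻¹ k)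
    rw [Equiv.Perm.apply_inv_self] at this
    exact this.symm
  

/-- Elements of the interval parabolic fix everything outside `[a,b]`. -/
lemma interval_fixes {n a b : ℕ} (x : Equiv.Perm (Fin n))
    (hx : x ∈ Subgroup.closure {g | ∃ m : ℕ, a ≤ m ∧ m < b ∧ g = sT n m}) :
    ∀ k : Fin n, ((k : ℕ) < a ∨ b < (k : ℕ)) → x k = k := by
  induction hx using Subgroup.closure_induction with
  | mem g hg =>
    obtain ⟨m, hma, hmb, rfl⟩ := hg
    intro k hk
    by_cases hm : m + 1 < n
    · exact sT_apply_ne n m hm k (by omega) (by omega)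
    · rw [sT, dif_neg hm]; rfl
  | one => intro k _; rfl
  | mul g h _ _ ihg ihh =>
    intro k hk
    rw [Equiv.Perm.mul_apply, ihh k hk, ihg k hk]
  | inv g hgmem ihg =>
    intro k hk
    have h1 : g k = k := ihg k hk
    calc g⁻¹ k = g⁻¹ (g k) := by rw [h1]
      _ = k := Equiv.Perm.inv_apply_self g k

/-- `Ni` is invariant under right multiplication by elements of `W_I`. -/
lemma Ni_WI {n i : ℕ} (w' u : Equiv.Perm (Fin n)) (hu : u ∈ WIsub n i) (c : ℕ) :
    Ni n i c (w' * u) = Ni n i c w' := by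
  unfold Ni
  congr 1
  apply Finset.filter_congr
  intro k _
  have : (w' * u)⁻¹ k = u⁻¹ (w'⁻¹ k) := by rw [mul_inv_rev, Equiv.Perm.mul_apply]
  rw [this]
  have hui := WI_preserves u⁻¹ (Subgroup.inv_mem _ hu) (w'⁻¹ k)
  exact and_congr_right fun _ => hui

/-- `Ni` at cut points outside `(a,b]` is invariant under left multiplication by elements of
the interval parabolic. -/
lemma Ni_interval {n i a b : ℕ} (x v : Equiv.Perm (Fin n))
    (hx : x ∈ Subgroup.closure {g | ∃ m : ℕ, a ≤ m ∧ m < b ∧ g = sT n m})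
    (c : ℕ) (hc : c ≤ a ∨ b < c) :
    Ni n i c (x * v) = Ni n i c v := by
  have hfix := interval_fixes x hx
  have hfixinv : ∀ k : Fin n, ((k : ℕ) < a ∨ b < (k : ℕ)) → x⁻¹ k = k := by
    intro k hk
    have h1 := hfix k hk
    calc x⁻¹ k = x⁻¹ (x k) := by rw [h1]
      _ = k := Equiv.Perm.inv_apply_self x k
  have hlt : ∀ k : Fin n, (k : ℕ) < c → ((x⁻¹ k : Fin n) : ℕ) < c := by
    intro k hk
    by_cases h1 : ((x⁻¹ k : Fin n) : ℕ) < a ∨ b < ((x⁻¹ k : Fin n) : ℕ)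
    · have := hfix (x⁻¹ k) h1
      rw [Equiv.Perm.apply_inv_self] at this
      rw [← this]; exact hk
    · push_neg at h1
      rcases hc with hc | hc
      · have := hfixinv k (Or.inl (lt_of_lt_of_le hk hc))
        rw [this]; exact hk
      · omega
  have hlt' : ∀ k : Fin n, (k : ℕ) < c → ((x k : Fin n) : ℕ) < c := by
    intro k hk
    by_cases h1 : ((k : ℕ) < a ∨ b < (k : ℕ))
    · rw [hfix k h1]; exact hk
    · push_neg at h1
      by_cases h2 : ((x k : Fin n) : ℕ) < a ∨ b < ((x k : Fin n) : ℕ)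
      · exfalso
        have := hfixinv (x k) h2
        rw [Equiv.Perm.inv_apply_self] at this
        rw [← this] at h2
        omega
      · push_neg at h2
        rcases hc with hc | hc
        · omega
        · omega
  unfold Ni
  apply Finset.card_bij' (fun k _ => x⁻¹ k) (fun k _ => x k)
  · intro k hk
    simp only [Finset.mem_filter, Finset.mem_univ, true_and] at hk ⊢
    refine ⟨hlt k hk.1, ?_⟩
    have : (x * v)⁻¹ k = v⁻¹ (x⁻¹ k) := by rw [mul_inv_rev, Equiv.Perm.mul_apply]
    rw [this] at hk
    exact hk.2
  · intro k hk
    simp only [Finset.mem_filter, Finset.mem_univ, true_and] at hk ⊢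
    refine ⟨hlt' k hk.1, ?_⟩
    have : (x * v)⁻¹ (x k) = v⁻¹ (x⁻¹ (x k)) := by rw [mul_inv_rev, Equiv.Perm.mul_apply]
    rw [this, Equiv.Perm.inv_apply_self]
    exact hk.2
  · intro k _; exact Equiv.Perm.apply_inv_self x k
  · intro k _; exact Equiv.Perm.inv_apply_self x k

end ValleyAux

namespace ValleyAux

/-- A minimal coset representative is increasing within each block. -/
lemma minRep_increasing {n i : ℕ} (w : Equiv.Perm (Fin n)) (hw : w ∈ minRep n i)
    (m : ℕ) (hm : m + 1 < n) (hmi : m + 1 ≠ i) :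
    w ⟨m, Nat.lt_of_succ_lt hm⟩ < w ⟨m + 1, hm⟩ := by
  set p : Fin n := ⟨m, Nat.lt_of_succ_lt hm⟩
  set q : Fin n := ⟨m + 1, hm⟩
  have hpq : p < q := by simp [p, q, Fin.lt_def]
  by_contra hcon
  have hne : w p ≠ w q := fun h => absurd (w.injective h) (by simp [p, q, Fin.ext_iff])
  have hlt : w q < w p := (hne.symm.lt_or_gt.resolve_right (by exact hcon))
  have hsT : sT n m = Equiv.swap p q := by rw [sT, dif_pos hm]
  have hkey := invLen_lt_mul_swap (w * Equiv.swap p q) p q hpq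
    (by
      rw [Equiv.Perm.mul_apply, Equiv.Perm.mul_apply, Equiv.swap_apply_left,
        Equiv.swap_apply_right]
      exact hlt)
  rw [mul_assoc, Equiv.swap_mul_self, mul_one] at hkey
  have hmin := hw m hm hmi
  rw [hsT] at hmin
  exact absurd hmin (not_lt.2 hkey.le)

/-- Chaining adjacent increases. -/
lemma chain_lt {α : Type*} [Preorder α] (g : ℕ → α) (N : ℕ)
    (h : ∀ m, m + 1 < N → g m < g (m + 1)) :
    ∀ m2, m2 < N → ∀ m1, m1 < m2 → g m1 < g m2 := by
  intro m2
  induction m2 with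
  | zero => intro _ m1 hm1; omega
  | succ m ih =>
    intro hm2 m1 hm1
    rcases Nat.lt_or_ge m1 m with h1 | h1
    · exact lt_trans (ih (by omega) m1 h1) (h m hm2)
    · have : m1 = m := by omega
      rw [this]
      exact h m hm2

lemma card_val_lt (n i : ℕ) (hin : i ≤ n) :
    (Finset.univ.filter fun k : Fin n => (k : ℕ) < i).card = i := by
  rcases Nat.eq_zero_or_pos i with rfl | hipos
  · convert Finset.card_empty
    apply Finset.filter_false_of_mem
    intro k _
    omega
  have hn0 : 0 < n := lt_of_lt_of_le hipos hin
  have h1 : (Finset.univ.filter fun k : Fin n => (k : ℕ) < i).card ≤ (Finset.range i).card := by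
    apply Finset.card_le_card_of_injOn (fun k : Fin n => (k : ℕ))
    · intro k hk
      simp only [Finset.mem_coe, Finset.mem_filter, Finset.mem_univ, true_and] at hk
      exact Finset.mem_range.2 hk
    · intro k1 _ k2 _ hh; exact Fin.ext hh
  have h2 : (Finset.range i).card ≤
      (Finset.univ.filter fun k : Fin n => (k : ℕ) < i).card := by
    apply Finset.card_le_card_of_injOn
      (fun m => (⟨min m (n - 1), by omega⟩ : Fin n))
    · intro m hm
      have hm' := Finset.mem_range.1 hm
      have hmin : min m (n - 1) = m := by omega
      simp only [Finset.mem_coe, Finset.mem_filter, Finset.mem_univ, true_and]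
      show min m (n - 1) < i
      omega
    · intro m1 hm1 m2 hm2 hh
      have h1' := Finset.mem_range.1 hm1
      have h2' := Finset.mem_range.1 hm2
      simp only [Fin.mk.injEq] at hh
      omega
  have h3 : (Finset.range i).card = i := Finset.card_range i
  omega

lemma card_down (n i : ℕ) (hin : i ≤ n) (u : Equiv.Perm (Fin n)) :
    (Finset.univ.filter fun k : Fin n => toPath i u k = true).card = i := by
  have h1 : (Finset.univ.filter fun k : Fin n => toPath i u k = true).card
      = (Finset.univ.filter fun k : Fin n => (k : ℕ) < i).card := by
    apply Finset.card_bij' (fun k _ => u⁻¹ k) (fun k _ => u k)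
    · intro k hk
      simp only [Finset.mem_filter, Finset.mem_univ, true_and, toPath,
        decide_eq_true_eq] at hk ⊢
      exact hk
    · intro k hk
      simp only [Finset.mem_filter, Finset.mem_univ, true_and, toPath,
        decide_eq_true_eq] at hk ⊢
      rw [Equiv.Perm.inv_apply_self]
      exact hk
    · intro k _; exact Equiv.Perm.apply_inv_self u k
    · intro k _; exact Equiv.Perm.inv_apply_self u k
  rw [h1, card_val_lt n i hin]

lemma card_up (n i : ℕ) (hin : i ≤ n) (u : Equiv.Perm (Fin n)) :
    (Finset.univ.filter fun k : Fin n => toPath i u k = false).card = n - i := by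
  have hsum := Finset.card_filter_add_card_filter_not
    (s := (Finset.univ : Finset (Fin n))) (p := fun k => toPath i u k = true)
  have hconv : (Finset.univ.filter fun k : Fin n => ¬ toPath i u k = true)
      = (Finset.univ.filter fun k : Fin n => toPath i u k = false) := by
    apply Finset.filter_congr
    intro k _
    simp [Bool.not_eq_true]
  rw [hconv, card_down n i hin u, Finset.card_univ, Fintype.card_fin] at hsum
  omega

set_option maxHeartbeats 1600000 in
/-- Minimal representatives are determined by their path. -/
lemma path_determines {n i : ℕ} (hi2 : i < n) (v w : Equiv.Perm (Fin n))
    (hv : v ∈ minRep n i) (hw : w ∈ minRep n i)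
    (hpath : toPath i v = toPath i w) : v = w := by
  have hn : 0 < n := Nat.lt_of_le_of_lt (Nat.zero_le i) hi2
  have hin : i ≤ n := hi2.le
  set S : Finset (Fin n) := Finset.univ.filter fun k : Fin n => toPath i w k = true with hS
  set T : Finset (Fin n) := Finset.univ.filter fun k : Fin n => toPath i w k = false with hT
  have hcardS : S.card = i := card_down n i hin w
  have hcardT : T.card = n - i := card_up n i hin w
  -- block 1 functions
  have block1 : ∀ u : Equiv.Perm (Fin n), u ∈ minRep n i → toPath i u = toPath i w →
      (fun m : Fin i => u ⟨(m : ℕ), lt_of_lt_of_le m.2 hin⟩) = S.orderEmbOfFin hcardS := by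
    intro u hu hup
    apply Finset.orderEmbOfFin_unique
    · intro m
      simp only [hS, Finset.mem_filter, Finset.mem_univ, true_and]
      rw [← hup]
      simp only [toPath, Equiv.Perm.inv_apply_self, decide_eq_true_eq]
      exact m.2
    · -- strict mono
      intro m1 m2 hlt
      set g : ℕ → Fin n := fun m => if h : m < n then u ⟨m, h⟩ else u ⟨0, hn⟩ with hg
      have hadj : ∀ m, m + 1 < i → g m < g (m + 1) := by
        intro m hm
        have h1 : m < n := by omega
        have h2 : m + 1 < n := by omega
        rw [hg]
        simp only [dif_pos h1, dif_pos h2]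
        exact minRep_increasing u hu m h2 (by omega)
      have := chain_lt g i hadj (m2 : ℕ) m2.2 (m1 : ℕ) hlt
      rw [hg] at this
      simp only [dif_pos (lt_of_lt_of_le m1.2 hin), dif_pos (lt_of_lt_of_le m2.2 hin)] at this
      exact this
  -- block 2 functions
  have block2 : ∀ u : Equiv.Perm (Fin n), u ∈ minRep n i → toPath i u = toPath i w →
      (fun m : Fin (n - i) => u ⟨i + (m : ℕ), by omega⟩) = T.orderEmbOfFin hcardT := by
    intro u hu hup
    apply Finset.orderEmbOfFin_unique
    · intro m
      simp only [hT, Finset.mem_filter, Finset.mem_univ, true_and]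
      rw [← hup]
      simp only [toPath, Equiv.Perm.inv_apply_self, decide_eq_false_iff_not, not_lt]
      show i ≤ i + (m : ℕ)
      omega
    · intro m1 m2 hlt
      set g : ℕ → Fin n := fun m => if h : i + m < n then u ⟨i + m, h⟩ else u ⟨0, hn⟩ with hg
      have hadj : ∀ m, m + 1 < n - i → g m < g (m + 1) := by
        intro m hm
        have h1 : i + m < n := by omega
        have h2 : i + (m + 1) < n := by omega
        rw [hg]
        simp only [dif_pos h1, dif_pos h2]
        have h3 : (i + m) + 1 < n := by omega
        exact minRep_increasing u hu (i + m) h3 (by omega)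
      have := chain_lt g (n - i) hadj (m2 : ℕ) m2.2 (m1 : ℕ) hlt
      rw [hg] at this
      have e1 : i + (m1 : ℕ) < n := by omega
      have e2 : i + (m2 : ℕ) < n := by omega
      simp only [dif_pos e1, dif_pos e2] at this
      exact this
  have hv1 := block1 v hv hpath
  have hw1 := block1 w hw rfl
  have hv2 := block2 v hv hpath
  have hw2 := block2 w hw rfl
  apply Equiv.ext
  intro k
  by_cases hk : (k : ℕ) < i
  · have e1 : v k = v ⟨((⟨(k : ℕ), hk⟩ : Fin i) : ℕ), lt_of_lt_of_le hk hin⟩ := rfl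
    have e2 : w k = w ⟨((⟨(k : ℕ), hk⟩ : Fin i) : ℕ), lt_of_lt_of_le hk hin⟩ := rfl
    rw [e1, e2]
    exact congrFun (hv1.trans hw1.symm) ⟨(k : ℕ), hk⟩
  · have hk2 : (k : ℕ) - i < n - i := by omega
    have ekk : k = (⟨i + (((⟨(k : ℕ) - i, hk2⟩ : Fin (n - i))) : ℕ), by omega⟩ : Fin n) := by
      apply Fin.ext
      show (k : ℕ) = i + ((k : ℕ) - i)
      omega
    have e1 : v k = v ⟨i + (((⟨(k : ℕ) - i, hk2⟩ : Fin (n - i))) : ℕ), by omega⟩ :=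
      congrArg v ekk
    have e2 : w k = w ⟨i + (((⟨(k : ℕ) - i, hk2⟩ : Fin (n - i))) : ℕ), by omega⟩ :=
      congrArg w ekk
    rw [e1, e2]
    exact congrFun (hv2.trans hw2.symm) ⟨(k : ℕ) - i, hk2⟩

end ValleyAux

namespace ValleyAux

lemma Ni_succ (n i : ℕ) (u : Equiv.Perm (Fin n)) (k0 : Fin n) :
    Ni n i ((k0 : ℕ) + 1) u =
      Ni n i (k0 : ℕ) u + (if toPath i u k0 = true then 1 else 0) := by
  rw [Ni_split n i (k0 : ℕ) ((k0 : ℕ) + 1) (Nat.le_succ _) u]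
  congr 1
  by_cases hP : ((u⁻¹ k0 : Fin n) : ℕ) < i
  · have hfil : (Finset.univ.filter fun k : Fin n =>
        (k0 : ℕ) ≤ (k : ℕ) ∧ (k : ℕ) < (k0 : ℕ) + 1 ∧ ((u⁻¹ k : Fin n) : ℕ) < i) = {k0} := by
      ext k
      simp only [Finset.mem_filter, Finset.mem_univ, true_and, Finset.mem_singleton]
      constructor
      · rintro ⟨h1, h2, _⟩
        exact Fin.ext (by omega)
      · rintro rfl
        exact ⟨le_refl _, by omega, hP⟩
    rw [hfil, Finset.card_singleton, if_pos (by simpa [toPath] using hP)]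
  · have hfil : (Finset.univ.filter fun k : Fin n =>
        (k0 : ℕ) ≤ (k : ℕ) ∧ (k : ℕ) < (k0 : ℕ) + 1 ∧ ((u⁻¹ k : Fin n) : ℕ) < i) = ∅ := by
      ext k
      simp only [Finset.mem_filter, Finset.mem_univ, true_and, Finset.notMem_empty, iff_false]
      rintro ⟨h1, h2, h3⟩
      have : k = k0 := Fin.ext (by omega)
      rw [this] at h3
      exact hP h3
    rw [hfil, Finset.card_empty, if_neg (by simpa [toPath] using hP)]

/-- If `v < w` strictly in Bruhat order (both minimal representatives), then some count
is strictly smaller for `v`. -/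
lemma exists_strict (n i : ℕ) (hi2 : i < n) (v w : Equiv.Perm (Fin n))
    (hv : v ∈ minRep n i) (hw : w ∈ minRep n i) (hvw : bruhatLE v w) (hne : v ≠ w) :
    ∃ c : ℕ, c ≤ n ∧ Ni n i c w < Ni n i c v := by
  have hpne : toPath i v ≠ toPath i w := fun h => hne (path_determines hi2 v w hv hw h)
  have hSne : (Finset.univ.filter fun k : Fin n => toPath i v k ≠ toPath i w k).Nonempty := by
    obtain ⟨k, hk⟩ := Function.ne_iff.1 hpne
    exact ⟨k, Finset.mem_filter.2 ⟨Finset.mem_univ k, hk⟩⟩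
  set S := Finset.univ.filter fun k : Fin n => toPath i v k ≠ toPath i w k with hSdef
  set k0 := S.min' hSne with hk0
  have hk0mem : k0 ∈ S := S.min'_mem hSne
  have hk0ne : toPath i v k0 ≠ toPath i w k0 := (Finset.mem_filter.1 hk0mem).2
  have hagree : ∀ k : Fin n, (k : ℕ) < (k0 : ℕ) → toPath i v k = toPath i w k := by
    intro k hk
    by_contra hcon
    have : k ∈ S := Finset.mem_filter.2 ⟨Finset.mem_univ k, hcon⟩
    have := S.min'_le k this
    rw [← hk0] at this
    exact absurd hk (not_lt.2 this)
  have heq : Ni n i (k0 : ℕ) v = Ni n i (k0 : ℕ) w := by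
    unfold Ni
    congr 1
    apply Finset.filter_congr
    intro k _
    by_cases hklt : (k : ℕ) < (k0 : ℕ)
    · have := hagree k hklt
      simp only [toPath] at this
      have hiff := decide_eq_decide.1 this
      exact and_congr_right fun _ => hiff
    · constructor <;> (rintro ⟨h1, _⟩; exact absurd h1 hklt)
  have hsv := Ni_succ n i v k0
  have hsw := Ni_succ n i w k0
  refine ⟨(k0 : ℕ) + 1, k0.2, ?_⟩
  have hle := bruhat_Ni n i v w hvw ((k0 : ℕ) + 1)
  have hdiff : (if toPath i v k0 = true then 1 else 0) ≠
      (if toPath i w k0 = true then 1 else 0) := by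
    rcases Bool.eq_false_or_eq_true (toPath i v k0) with h1 | h1 <;>
      rcases Bool.eq_false_or_eq_true (toPath i w k0) with h2 | h2 <;>
        simp [h1, h2] at hk0ne ⊢
  omega

end ValleyAux

open ValleyAux

/-- if `w ∈ W^I` has a valley at `j` with maximal `↘`-run `a..j` and `↗`-run
`j+1..b` (0-indexed entries), `v < w` in `W^I` and `x ∈ W_{[a,b-1]}`, then the minimal
representative of `x·v·W_I` is not `≥ w` in Bruhat order.
Here `true` encodes `↘`, `false` encodes `↗`. -/
theorem valley_not_ge (n i : ℕ) (hi1 : 1 ≤ i) (hi2 : i < n)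
    (w : Equiv.Perm (Fin n)) (hw : w ∈ minRep n i)
    (a j b : ℕ) (hab : a ≤ j) (hjb : j < b) (hbn : b < n)
    (hdown : ∀ k (hk : k < n), a ≤ k → k ≤ j → toPath i w ⟨k, hk⟩ = true)
    (hup : ∀ k (hk : k < n), j + 1 ≤ k → k ≤ b → toPath i w ⟨k, hk⟩ = false)
    (v : Equiv.Perm (Fin n)) (hv : v ∈ minRep n i) (hvw : bruhatLE v w) (hne : v ≠ w)
    (x : Equiv.Perm (Fin n))
    (hx : x ∈ Subgroup.closure {g | ∃ m : ℕ, a ≤ m ∧ m < b ∧ g = sT n m}) :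
    ∀ w' ∈ minRep n i, (∃ u ∈ WIsub n i, x * v = w' * u) → ¬ bruhatLE w w' := by
  intro w' _ hex hww'
  obtain ⟨u, hu, hxv⟩ := hex
  have H1 : ∀ c, Ni n i c w ≤ Ni n i c v := bruhat_Ni n i v w hvw
  have Hstar : ∀ c, Ni n i c w' ≤ Ni n i c w := bruhat_Ni n i w w' hww'
  have H2 : ∀ c, c ≤ a ∨ b < c → Ni n i c w' = Ni n i c v := by
    intro c hc
    have e1 : Ni n i c (x * v) = Ni n i c v := Ni_interval x v hx c hc
    have e2 : Ni n i c (x * v) = Ni n i c w' := by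
      rw [hxv]; exact Ni_WI w' u hu c
    omega
  have final : ∀ c, (c ≤ a ∨ b < c) → Ni n i c w < Ni n i c v → False := by
    intro c hc hlt
    have := Hstar c
    rw [H2 c hc] at this
    omega
  -- helpers to convert path hypotheses to the `Ni` predicates
  have hdown' : ∀ k : Fin n, a ≤ (k : ℕ) → (k : ℕ) ≤ j → ((w⁻¹ k : Fin n) : ℕ) < i := by
    intro k h1 h2
    have := hdown (k : ℕ) k.2 h1 h2
    simpa [toPath] using this
  have hup' : ∀ k : Fin n, j + 1 ≤ (k : ℕ) → (k : ℕ) ≤ b → ¬ ((w⁻¹ k : Fin n) : ℕ) < i := by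
    intro k h1 h2
    have := hup (k : ℕ) k.2 h1 h2
    simpa [toPath] using this
  obtain ⟨c0, hc0n, hc0⟩ := exists_strict n i hi2 v w hv hw hvw hne
  by_cases hcase : c0 ≤ a ∨ b < c0
  · exact final c0 hcase hc0
  push_neg at hcase
  obtain ⟨hac0, hc0b⟩ := hcase
  by_cases h2a : Ni n i a w < Ni n i a v
  · exact final a (Or.inl (le_refl a)) h2a
  by_cases h2b : Ni n i (b + 1) w < Ni n i (b + 1) v
  · exact final (b + 1) (Or.inr (by omega)) h2b
  have ea : Ni n i a w = Ni n i a v := le_antisymm (H1 a) (not_lt.1 h2a)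
  have eb : Ni n i (b + 1) w = Ni n i (b + 1) v := le_antisymm (H1 (b + 1)) (not_lt.1 h2b)
  by_cases hcj : c0 ≤ j + 1
  · -- all down-steps on `[a, c0)`
    have hrun : Ni n i c0 w = Ni n i a w + (c0 - a) := by
      apply Ni_run_true n i a c0 (by omega) hc0n w
      intro k h1 h2
      exact hdown' k h1 (by omega)
    have hvle : Ni n i c0 v ≤ Ni n i a v + (c0 - a) := Ni_le_add n i a c0 (by omega) v
    omega
  · -- all up-steps on `[c0, b+1)`
    have hrun : Ni n i (b + 1) w = Ni n i c0 w := by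
      apply Ni_run_false n i c0 (b + 1) (by omega) w
      intro k h1 h2
      exact hup' k (by omega) (by omega)
    have hvle : Ni n i c0 v ≤ Ni n i (b + 1) v := Ni_mono n i c0 (b + 1) (by omega) v
    omega
end
end
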